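/- Let r > 0, ρ > r, c > 0, A ∈ [0, c], T > 0, and t ∈ [0, T]. Then the safe level with immediate annuities available, w̄̄(A,t) = min[ A(1 − e^{−r(T−t)})/r + (c−A)/ρ, c/ρ ], satisfies w̄̄(A,t) ≤ w̄(A,t) = c(1 − e^{−r(T−t)})/r + (c−A) e^{−ρ(T−t)}/ρ, with strict inequality when t < T and A < c. -/

import Mathlib

lemma key_smono (r ρ : ℝ) (hr : 0 < r) (hρ : r < ρ) :
    StrictMonoOn (fun s : ℝ => ρ * (1 - Real.exp (-r * s)) - r * (1 - Real.exp (-ρ * s)))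
      (Set.Ici 0) := by
  apply strictMonoOn_of_deriv_pos (convex_Ici 0)
  · fun_prop
  · intro s hs
    rw [interior_Ici] at hs
    have h1 : HasDerivAt (fun s : ℝ => Real.exp (-r * s)) (-r * Real.exp (-r * s)) s := by
      have := ((hasDerivAt_id s).const_mul (-r)).exp
      simpa [mul_comm] using this
    have h2 : HasDerivAt (fun s : ℝ => Real.exp (-ρ * s)) (-ρ * Real.exp (-ρ * s)) s := by
      have := ((hasDerivAt_id s).const_mul (-ρ)).exp
      simpa [mul_comm] using this
    have h := (((hasDerivAt_const s (1:ℝ)).sub h1).const_mul ρ).sub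
        (((hasDerivAt_const s (1:ℝ)).sub h2).const_mul r)
    rw [(show HasDerivAt (fun s : ℝ => ρ * (1 - Real.exp (-r * s)) - r * (1 - Real.exp (-ρ * s))) _ s from h).deriv]
    have hρ0 : 0 < ρ := lt_trans hr hρ
    have hexp : Real.exp (-ρ * s) < Real.exp (-r * s) := by
      apply Real.exp_lt_exp.mpr
      nlinarith [hs.out]
    nlinarith [mul_pos (mul_pos hr hρ0) (sub_pos.mpr hexp)]

lemma key_ineq (r ρ : ℝ) (hr : 0 < r) (hρ : r < ρ) (s : ℝ) (hs : 0 ≤ s) :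
    r * (1 - Real.exp (-ρ * s)) ≤ ρ * (1 - Real.exp (-r * s)) := by
  have := (key_smono r ρ hr hρ).monotoneOn (Set.self_mem_Ici) hs hs
  norm_num at this
  rw [neg_mul, neg_mul]
  linarith

lemma key_ineq_strict (r ρ : ℝ) (hr : 0 < r) (hρ : r < ρ) (s : ℝ) (hs : 0 < s) :
    r * (1 - Real.exp (-ρ * s)) < ρ * (1 - Real.exp (-r * s)) := by
  have := key_smono r ρ hr hρ (Set.self_mem_Ici) (Set.mem_Ici.mpr hs.le) hs
  norm_num at this
  rw [neg_mul, neg_mul]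
  linarith

theorem stmt8 (r ρ c A T t : ℝ) (hr : 0 < r) (hρ : r < ρ) (hc : 0 < c)
    (hA : A ∈ Set.Icc 0 c) (hT : 0 < T) (ht : t ∈ Set.Icc 0 T) :
    min (A * (1 - Real.exp (-r * (T - t))) / r + (c - A) / ρ) (c / ρ)
      ≤ c * (1 - Real.exp (-r * (T - t))) / r + (c - A) * Real.exp (-ρ * (T - t)) / ρ ∧
    (t < T → A < c →
      min (A * (1 - Real.exp (-r * (T - t))) / r + (c - A) / ρ) (c / ρ)
        < c * (1 - Real.exp (-r * (T - t))) / r + (c - A) * Real.exp (-ρ * (T - t)) / ρ) := by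
  obtain ⟨hA0, hAc⟩ := hA
  obtain ⟨ht0, htT⟩ := ht
  have hs : 0 ≤ T - t := by linarith
  have hrρ : 0 < ρ := lt_trans hr hρ
  have hrρ' : 0 < r * ρ := mul_pos hr hrρ
  constructor
  · refine le_trans (min_le_left _ _) ?_
    have hk := key_ineq r ρ hr hρ (T - t) hs
    have hca : 0 ≤ c - A := by linarith
    have h2 := mul_le_mul_of_nonneg_left hk hca
    rw [div_add_div _ _ hr.ne' hrρ.ne', div_add_div _ _ hr.ne' hrρ.ne',
      div_le_div_iff₀ hrρ' hrρ']
    nlinarith [mul_le_mul_of_nonneg_right h2 hrρ'.le]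
  · intro htT' hAc'
    refine lt_of_le_of_lt (min_le_left _ _) ?_
    have hk := key_ineq_strict r ρ hr hρ (T - t) (by linarith)
    have hca : 0 < c - A := by linarith
    have h2 := mul_lt_mul_of_pos_left hk hca
    rw [div_add_div _ _ hr.ne' hrρ.ne', div_add_div _ _ hr.ne' hrρ.ne',
      div_lt_div_iff₀ hrρ' hrρ']
    nlinarith [mul_lt_mul_of_pos_right h2 hrρ']
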